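/- arXiv:2108.01058 — 2 statements merged into one kernel-verified Lean document; each statement's English description precedes it below -/
import Mathlib

section
/- If a polyhedron G on p vertices with q edges has at least one i-gonal face for every i with 4 ≤ i ≤ n, then 2q ≤ 6p - 12 - (n-3)(n-2). -/
lemma sumIcc_aux (n : ℕ) (hn : 3 ≤ n) :
    2 * ∑ i ∈ Finset.Icc 4 n, (i : ℤ) = (n : ℤ)^2 + n - 12 := by
  induction n with
  | zero => omega
  | succ m ih =>
    rcases Nat.lt_or_ge m 3 with h | h
    · have hm : m = 2 := by omega
      subst hm
      rw [show Finset.Icc 4 3 = ∅ from Finset.Icc_eq_empty (by omega)]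
      norm_num
    · rw [Finset.sum_Icc_succ_top (by omega : 4 ≤ m + 1)]
      have := ih h
      push_cast
      push_cast at this
      ring_nf
      ring_nf at this
      linarith

/-- If a polyhedron with `p` vertices, `q` edges and face multiset given by
`size : F → ℕ` (sum of face sizes `= 2q`, all faces of size `≥ 3`,
Euler's formula) has at least one `i`-gonal face for each `4 ≤ i ≤ n`, then
`2q ≤ 6p - 12 - (n-3)(n-2)`. -/
theorem face_upper_bound {F : Type*} [Fintype F] (size : F → ℕ)
    (n p q f : ℕ) (hn : 3 ≤ n)
    (hf : f = Fintype.card F)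
    (hEuler : (p : ℤ) - q + f = 2)
    (hhand : ∑ x, size x = 2 * q)
    (hmin : ∀ x, 3 ≤ size x)
    (hall : ∀ i, 4 ≤ i → i ≤ n → ∃ x, size x = i) :
    (2 * q : ℤ) ≤ 6 * (p : ℤ) - 12 - ((n : ℤ) - 3) * ((n : ℤ) - 2) := by
  classical
  have hex : ∀ i ∈ Finset.Icc 4 n, ∃ x, size x = i := fun i hi => by
    rw [Finset.mem_Icc] at hi; exact hall i hi.1 hi.2
  choose g hg using hex
  set s : Finset F := (Finset.Icc 4 n).attach.image (fun i => g i.1 i.2) with hs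
  have hinj : ∀ a ∈ (Finset.Icc 4 n).attach, ∀ b ∈ (Finset.Icc 4 n).attach,
      g a.1 a.2 = g b.1 b.2 → a = b := by
    intro a _ b _ hab
    have : a.1 = b.1 := by
      rw [← hg a.1 a.2, ← hg b.1 b.2, hab]
    exact Subtype.ext this
  have hsum_s : ∑ x ∈ s, (size x : ℤ) = ∑ i ∈ Finset.Icc 4 n, (i : ℤ) := by
    rw [hs, Finset.sum_image hinj]
    rw [← Finset.sum_attach (Finset.Icc 4 n) (fun i => (i : ℤ))]
    exact Finset.sum_congr rfl (fun i _ => by rw [hg i.1 i.2])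
  have hcard_s : s.card = n - 3 := by
    rw [hs, Finset.card_image_of_injOn hinj, Finset.card_attach, Nat.card_Icc]
    omega
  have hcard_le : s.card ≤ Fintype.card F := Finset.card_le_univ s
  -- lower bound on sum over complement
  have hcompl : (3 : ℤ) * (sᶜ.card : ℤ) ≤ ∑ x ∈ sᶜ, (size x : ℤ) := by
    calc (3 : ℤ) * (sᶜ.card : ℤ) = ∑ _x ∈ sᶜ, (3 : ℤ) := by
          rw [Finset.sum_const]; ring
      _ ≤ ∑ x ∈ sᶜ, (size x : ℤ) :=
          Finset.sum_le_sum (fun x _ => by exact_mod_cast hmin x)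
  have hsplit : ∑ x ∈ s, (size x : ℤ) + ∑ x ∈ sᶜ, (size x : ℤ) = 2 * q := by
    rw [Finset.sum_add_sum_compl]
    exact_mod_cast hhand
  have hcc : (sᶜ.card : ℤ) = (Fintype.card F : ℤ) - s.card := by
    rw [Finset.card_compl, Nat.cast_sub hcard_le]
  have hS := sumIcc_aux n hn
  have hcs : (s.card : ℤ) = (n : ℤ) - 3 := by
    rw [hcard_s]; push_cast [Nat.cast_sub hn]; ring
  have hfc : (f : ℤ) = (Fintype.card F : ℤ) := by rw [hf]
  -- combine
  have hkey : ∑ i ∈ Finset.Icc 4 n, (i : ℤ) + 3 * ((f : ℤ) - ((n : ℤ) - 3)) ≤ 2 * q := by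
    rw [← hsplit, ← hsum_s]
    have : (3 : ℤ) * ((f : ℤ) - ((n : ℤ) - 3)) = 3 * (sᶜ.card : ℤ) := by
      rw [hcc, ← hcs, hfc]
    rw [this]
    linarith [hcompl]
  nlinarith [hkey, hS, hEuler]
end

section
/- Let n ≥ 3 and let G be a polyhedron with p vertices and q edges such that every vertex has degree ≥ 3, G has at least one vertex of degree i for every 3 ≤ i ≤ n, every face has size ≥ 3, and G has at least one i-gonal face for every 3 ≤ i ≤ n. Then p ≥ (n² - 5n + 14)/2. -/
open Finset

lemma sum_ge_aux {T : Type*} [Fintype T] (g : T → ℕ) (n : ℕ) (hn : 3 ≤ n)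
    (hmin : ∀ t, 3 ≤ g t) (hall : ∀ i, 3 ≤ i → i ≤ n → ∃ t, g t = i) :
    (∑ i ∈ Finset.Icc 3 n, (i - 3)) + 3 * Fintype.card T ≤ ∑ t, g t := by
  classical
  have h : ∀ i, ∃ t : T, (3 ≤ i → i ≤ n → g t = i) := by
    intro i
    by_cases hi : 3 ≤ i ∧ i ≤ n
    · obtain ⟨t, ht⟩ := hall i hi.1 hi.2
      exact ⟨t, fun _ _ => ht⟩
    · obtain ⟨t, ht⟩ := hall 3 le_rfl hn
      exact ⟨t, fun h1 h2 => absurd ⟨h1, h2⟩ hi⟩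
  choose e he using h
  have hg : ∀ i ∈ Finset.Icc 3 n, g (e i) = i := by
    intro i hi
    rw [Finset.mem_Icc] at hi
    exact he i hi.1 hi.2
  have hinj : Set.InjOn e (Finset.Icc 3 n) := by
    intro a ha b hb hab
    have := hg a ha
    rw [hab, hg b hb] at this
    exact this.symm
  have h1 : ∑ i ∈ Finset.Icc 3 n, (i - 3) = ∑ t ∈ (Finset.Icc 3 n).image e, (g t - 3) := by
    rw [Finset.sum_image (fun a ha b hb => hinj ha hb)]
    exact Finset.sum_congr rfl (fun i hi => by rw [hg i hi])
  have h2 : ∑ t ∈ (Finset.Icc 3 n).image e, (g t - 3) ≤ ∑ t, (g t - 3) :=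
    Finset.sum_le_sum_of_subset (Finset.subset_univ _)
  have h3 : ∑ t, g t = (∑ t, (g t - 3)) + 3 * Fintype.card T := by
    have heq : ∑ t, g t = ∑ t, ((g t - 3) + 3) :=
      Finset.sum_congr rfl (fun t _ => by have := hmin t; omega)
    rw [heq, Finset.sum_add_distrib, Finset.sum_const, Finset.card_univ, smul_eq_mul]
    ring
  omega

lemma gauss_aux (n : ℕ) (hn : 3 ≤ n) :
    2 * (∑ i ∈ Finset.Icc 3 n, (i - 3)) = (n - 2) * (n - 3) := by
  induction n, hn using Nat.le_induction with
  | base => decide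
  | succ n hn ih =>
    rw [Finset.sum_Icc_succ_top (by omega)]
    have h2 : 2 ≤ n := by omega
    rw [Nat.mul_add, ih]
    have : n + 1 - 2 = (n - 2) + 1 := by omega
    rw [this]
    have : n + 1 - 3 = (n - 3) + 1 := by omega
    rw [this]
    ring_nf
    omega

/-- A polyhedron satisfying property `S_n` (a vertex of degree `i` and an
`i`-gonal face for each `3 ≤ i ≤ n`) has at least `(n² - 5n + 14)/2` vertices. -/
theorem Sn_order_lower_bound {V F : Type*} [Fintype V] [Fintype F]
    (deg : V → ℕ) (size : F → ℕ) (n p q f : ℕ) (hn : 3 ≤ n)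
    (hp : p = Fintype.card V) (hf : f = Fintype.card F)
    (hEuler : (p : ℤ) - q + f = 2)
    (hhandV : ∑ v, deg v = 2 * q)
    (hhandF : ∑ x, size x = 2 * q)
    (hdegmin : ∀ v, 3 ≤ deg v)
    (hdegall : ∀ i, 3 ≤ i → i ≤ n → ∃ v, deg v = i)
    (hsizemin : ∀ x, 3 ≤ size x)
    (hsizeall : ∀ i, 3 ≤ i → i ≤ n → ∃ x, size x = i) :
    (p : ℤ) ≥ ((n : ℤ) ^ 2 - 5 * (n : ℤ) + 14) / 2 := by
  set C : ℕ := ∑ i ∈ Finset.Icc 3 n, (i - 3) with hC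
  have hV := sum_ge_aux deg n hn hdegmin hdegall
  have hF := sum_ge_aux size n hn hsizemin hsizeall
  rw [hhandV, ← hp] at hV
  rw [hhandF, ← hf] at hF
  have hg := gauss_aux n hn
  -- 2*C = (n-2)*(n-3); cast to ℤ
  have h2C : 2 * (C : ℤ) = ((n : ℤ) - 2) * ((n : ℤ) - 3) := by
    have h := congrArg (Nat.cast : ℕ → ℤ) hg
    rw [Nat.cast_mul, Nat.cast_mul, Nat.cast_sub (show 2 ≤ n by omega),
      Nat.cast_sub (show 3 ≤ n from hn)] at h
    rw [hC, Nat.cast_sum]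
    push_cast at h ⊢
    linarith [h]
  -- p ≥ C + 4
  have hpC : (C : ℤ) + 4 ≤ (p : ℤ) := by
    have hV' : (C : ℤ) + 3 * p ≤ 2 * q := by exact_mod_cast hV
    have hF' : (C : ℤ) + 3 * f ≤ 2 * q := by exact_mod_cast hF
    linarith
  have hkey : (n : ℤ) ^ 2 - 5 * n + 14 = 2 * ((C : ℤ) + 4) := by nlinarith [h2C]
  rw [hkey, Int.mul_ediv_cancel_left _ (by norm_num)]
  exact hpC
end
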